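/- Let s ≥ 0. There exists a constant C = C(s) > 0 such that for all nonnegative sequences a1, a2, a3, a4 : ℤ → [0,∞), the sequence G : ℤ → [0,∞] defined by G_k = Σ a1(k1)·a2(k2)·a3(k3)·a4(k4)/(|k3+k4|·|k1+k2+k3|·|k1+k2+k4|), where the sum ranges over all quadruples (k1,k2,k3,k4) ∈ ℤ⁴ with k1+k2+k3+k4 = k and (k3+k4)(k1+k2+k3)(k1+k2+k4) ≠ 0, satisfies ‖G‖_{H^s} ≤ C·‖a1‖_{H^s}·‖a2‖_{H^s}·‖a3‖_{H^s}·‖a4‖_{H^s} (the inequality holding in [0,∞]). -/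

import Mathlib

open scoped ENNReal

/-- The `H^s` norm of a sequence indexed by `ℤ`, with values in `[0,∞]`. -/
noncomputable def HsE (s : ℝ) (a : ℤ → ℝ≥0∞) : ℝ≥0∞ :=
  (∑' k : ℤ, ENNReal.ofReal ((1 + (k : ℝ) ^ 2) ^ s) * a k ^ 2) ^ (1 / 2 : ℝ)

open MeasureTheory

namespace Stmt13Aux


lemma sq_rt (x : ℝ≥0∞) : (x ^ 2) ^ (1/2 : ℝ) = x := by
  rw [← ENNReal.rpow_natCast x 2, ← ENNReal.rpow_mul]
  norm_num

lemma cs_tsum {α : Type*} [Countable α] (f g : α → ℝ≥0∞) :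
    ∑' a, f a * g a ≤ (∑' a, f a ^ 2) ^ (1/2 : ℝ) * (∑' a, g a ^ 2) ^ (1/2 : ℝ) := by
  letI : MeasurableSpace α := ⊤
  haveI : MeasurableSingletonClass α := ⟨fun _ => trivial⟩
  have hpq : Real.HolderConjugate 2 2 := Real.HolderConjugate.two_two
  have h := ENNReal.lintegral_mul_le_Lp_mul_Lq (μ := Measure.count (α := α)) hpq
    (measurable_of_countable f).aemeasurable (measurable_of_countable g).aemeasurable
  have h2 : ∀ x : ℝ≥0∞, x ^ (2:ℝ) = x ^ (2:ℕ) := fun x => by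
    rw [← ENNReal.rpow_natCast x 2]; norm_num
  simpa [lintegral_count, Pi.mul_apply, h2] using h

noncomputable def KK : ℝ≥0∞ := ∑' n : ℤ, if n ≠ 0 then ((n.natAbs : ℝ≥0∞) ^ 2)⁻¹ else 0

lemma KK_term_eq (n : ℤ) : (if n ≠ 0 then ((n.natAbs : ℝ≥0∞) ^ 2)⁻¹ else 0)
    = ENNReal.ofReal (1 / (n:ℝ)^2) := by
  by_cases hn : n = 0
  · simp [hn]
  · rw [if_pos hn]
    have hpos : (0:ℝ) < (n:ℝ)^2 := by
      have : (n:ℝ) ≠ 0 := Int.cast_ne_zero.mpr hn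
      positivity
    have h1 : ((n.natAbs : ℝ≥0∞)) = ENNReal.ofReal ((n.natAbs : ℝ)) :=
      (ENNReal.ofReal_natCast _).symm
    have h2 : ((n.natAbs : ℝ)) = |(n:ℝ)| := by
      rw [Nat.cast_natAbs, Int.cast_abs]
    rw [h1, h2, ← ENNReal.ofReal_pow (abs_nonneg _), sq_abs,
      ← ENNReal.ofReal_inv_of_pos hpos, one_div]

lemma KK_ne_top : KK ≠ ⊤ := by
  have hsum : Summable (fun n : ℤ => 1 / (n:ℝ)^2) :=
    Real.summable_one_div_int_pow.mpr one_lt_two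
  rw [KK, tsum_congr KK_term_eq,
    ← ENNReal.ofReal_tsum_of_nonneg (fun n => by positivity) hsum]
  exact ENNReal.ofReal_ne_top

noncomputable def wgt (s : ℝ) (k : ℤ) : ℝ≥0∞ := ENNReal.ofReal ((1 + (k:ℝ)^2) ^ (s/2))

lemma base_pos (k : ℤ) : (0:ℝ) < 1 + (k:ℝ)^2 := by positivity

lemma wgt_sq (s : ℝ) (k : ℤ) : wgt s k ^ 2 = ENNReal.ofReal ((1 + (k:ℝ)^2) ^ s) := by
  rw [wgt, ← ENNReal.ofReal_pow (Real.rpow_nonneg (base_pos k).le _)]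
  congr 1
  rw [← Real.rpow_natCast ((1 + (k:ℝ)^2) ^ (s/2)) 2, ← Real.rpow_mul (base_pos k).le]
  norm_num

lemma HsE_eq (s : ℝ) (a : ℤ → ℝ≥0∞) :
    HsE s a = (∑' k : ℤ, (wgt s k * a k) ^ 2) ^ (1/2 : ℝ) := by
  rw [HsE]
  congr 1
  exact tsum_congr fun k => by rw [mul_pow, wgt_sq]

lemma real_weight2 (a b : ℝ) : 1 + (a+b)^2 ≤ 2 * ((1+a^2) * (1+b^2)) := by
  nlinarith [sq_nonneg (a*b - 1), sq_nonneg (a - b), sq_nonneg (a*b), sq_nonneg a, sq_nonneg b]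

lemma real_weight4 (x1 x2 x3 x4 : ℝ) :
    1 + (x1+x2+x3+x4)^2 ≤ 8 * ((1+x1^2) * (1+x2^2) * (1+x3^2) * (1+x4^2)) := by
  have h2 := real_weight2 x2 (x3+x4)
  have h3 := real_weight2 x3 x4
  calc 1 + (x1+x2+x3+x4)^2 ≤ 2*((1+x1^2)*(1+(x2+x3+x4)^2)) := by
        have := real_weight2 x1 (x2+x3+x4); linarith [this]
    _ = (1+x1^2) * (2 * (1+(x2+x3+x4)^2)) := by ring
    _ ≤ (1+x1^2) * (2 * (2 * ((1+x2^2) * (1+(x3+x4)^2)))) := by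
        have := mul_le_mul_of_nonneg_left h2 (by positivity : (0:ℝ) ≤ 2)
        exact mul_le_mul_of_nonneg_left (by linarith) (by positivity)
    _ = ((1+x1^2) * (1+x2^2) * 4) * (1 + (x3+x4)^2) := by ring
    _ ≤ ((1+x1^2) * (1+x2^2) * 4) * (2 * ((1+x3^2) * (1+x4^2))) := by
        exact mul_le_mul_of_nonneg_left h3 (by positivity)
    _ = 8 * ((1+x1^2) * (1+x2^2) * (1+x3^2) * (1+x4^2)) := by ring

lemma wgt_split {s : ℝ} (hs : 0 ≤ s) {k1 k2 k3 k4 k : ℤ} (h : k1+k2+k3+k4 = k) :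
    wgt s k ≤ ENNReal.ofReal ((8:ℝ) ^ (s/2)) *
      (wgt s k1 * (wgt s k2 * (wgt s k3 * wgt s k4))) := by
  have hs2 : (0:ℝ) ≤ s/2 := by linarith
  have hk : (k:ℝ) = (k1:ℝ)+(k2:ℝ)+(k3:ℝ)+(k4:ℝ) := by
    rw [← h]; push_cast; ring
  have hreal : (1 + (k:ℝ)^2) ^ (s/2) ≤
      (8:ℝ)^(s/2) * ((1+(k1:ℝ)^2)^(s/2) * ((1+(k2:ℝ)^2)^(s/2) *
        ((1+(k3:ℝ)^2)^(s/2) * (1+(k4:ℝ)^2)^(s/2)))) := by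
    rw [hk]
    calc (1 + ((k1:ℝ)+(k2:ℝ)+(k3:ℝ)+(k4:ℝ))^2)^(s/2)
        ≤ (8 * ((1+(k1:ℝ)^2) * (1+(k2:ℝ)^2) * (1+(k3:ℝ)^2) * (1+(k4:ℝ)^2)))^(s/2) :=
          Real.rpow_le_rpow (by positivity) (real_weight4 _ _ _ _) hs2
      _ = _ := by
          rw [Real.mul_rpow (by norm_num) (by positivity),
            Real.mul_rpow (by positivity) (by positivity),
            Real.mul_rpow (by positivity) (by positivity),
            Real.mul_rpow (by positivity) (by positivity)]
          ring
  refine le_trans (ENNReal.ofReal_le_ofReal hreal) ?_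
  rw [ENNReal.ofReal_mul (by positivity), ENNReal.ofReal_mul (by positivity),
    ENNReal.ofReal_mul (by positivity), ENNReal.ofReal_mul (by positivity)]
  exact le_rfl



def e4 : (ℤ×ℤ)×(ℤ×ℤ) ≃ ℤ×ℤ×ℤ×ℤ where
  toFun r := (r.2.1, r.2.2, r.1.1, r.1.2)
  invFun q := ((q.2.2.1, q.2.2.2), (q.1, q.2.1))
  left_inv r := rfl
  right_inv q := rfl

@[simp] lemma e4_apply (p u : ℤ×ℤ) : e4 (p, u) = (u.1, u.2, p.1, p.2) := rfl

def psiE : (ℤ×ℤ×ℤ) ≃ (ℤ×(ℤ×ℤ)) where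
  toFun r := (r.2.2, (r.2.2 - r.1, r.2.2 - r.2.1))
  invFun q := (q.1 - q.2.1, q.1 - q.2.2, q.1)
  left_inv r := by
    obtain ⟨u, v, k⟩ := r
    simp [Prod.ext_iff]
  right_inv q := by
    obtain ⟨k, p1, p2⟩ := q
    simp [Prod.ext_iff]

@[simp] lemma psiE_apply (u v k : ℤ) : psiE (u, v, k) = (k, (k - u, k - v)) := rfl

lemma ite_split (x y z : ℤ) :
    (if x*y*z ≠ 0 then
        ((((x.natAbs:ℝ≥0∞)) * ((y.natAbs:ℝ≥0∞)) * ((z.natAbs:ℝ≥0∞)))⁻¹)^2 else 0)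
    = (if z ≠ 0 then ((z.natAbs:ℝ≥0∞)^2)⁻¹ else 0) *
      (if y ≠ 0 then ((y.natAbs:ℝ≥0∞)^2)⁻¹ else 0) *
      (if x ≠ 0 then ((x.natAbs:ℝ≥0∞)^2)⁻¹ else 0) := by
  by_cases hx : x = 0
  · simp [hx]
  by_cases hy : y = 0
  · simp [hy]
  by_cases hz : z = 0
  · simp [hz]
  have nx : (x.natAbs:ℝ≥0∞) ≠ 0 := Nat.cast_ne_zero.mpr (Int.natAbs_ne_zero.mpr hx)
  have ny : (y.natAbs:ℝ≥0∞) ≠ 0 := Nat.cast_ne_zero.mpr (Int.natAbs_ne_zero.mpr hy)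
  have ntx : (x.natAbs:ℝ≥0∞) ≠ ⊤ := ENNReal.natCast_ne_top _
  have nty : (y.natAbs:ℝ≥0∞) ≠ ⊤ := ENNReal.natCast_ne_top _
  have ntz : (z.natAbs:ℝ≥0∞) ≠ ⊤ := ENNReal.natCast_ne_top _
  rw [if_pos (mul_ne_zero (mul_ne_zero hx hy) hz), if_pos hx, if_pos hy, if_pos hz,
    ENNReal.mul_inv (Or.inr ntz) (Or.inl (ENNReal.mul_ne_top ntx nty)),
    ENNReal.mul_inv (Or.inr nty) (Or.inl ntx),
    ENNReal.inv_pow, ENNReal.inv_pow, ENNReal.inv_pow]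
  ring



noncomputable def Af (n : ℤ) : ℝ≥0∞ := if n ≠ 0 then ((n.natAbs : ℝ≥0∞) ^ 2)⁻¹ else 0

lemma KK_eq : KK = ∑' n : ℤ, Af n := rfl

noncomputable def N2 (b : ℤ → ℝ≥0∞) : ℝ≥0∞ := (∑' k : ℤ, b k ^ 2) ^ (1/2 : ℝ)

noncomputable def Fb (b1 b2 b3 b4 : ℤ → ℝ≥0∞) (k : ℤ) (q : ℤ×ℤ×ℤ×ℤ) : ℝ≥0∞ :=
  if q.1 + q.2.1 + q.2.2.1 + q.2.2.2 = k ∧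
      (q.2.2.1 + q.2.2.2) * (q.1 + q.2.1 + q.2.2.1) * (q.1 + q.2.1 + q.2.2.2) ≠ 0
  then b1 q.1 * b2 q.2.1 * b3 q.2.2.1 * b4 q.2.2.2 /
      (((q.2.2.1 + q.2.2.2).natAbs : ℝ≥0∞) *
        ((q.1 + q.2.1 + q.2.2.1).natAbs : ℝ≥0∞) *
        ((q.1 + q.2.1 + q.2.2.2).natAbs : ℝ≥0∞))
  else 0

noncomputable def Htf (b3 b4 : ℤ → ℝ≥0∞) (k : ℤ) (p : ℤ×ℤ) : ℝ≥0∞ :=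
  if (p.1+p.2) * (k-p.2) * (k-p.1) ≠ 0 then
    b3 p.1 * b4 p.2 /
      (((p.1+p.2).natAbs : ℝ≥0∞) * (((k-p.2).natAbs) : ℝ≥0∞) * (((k-p.1).natAbs) : ℝ≥0∞))
  else 0

noncomputable def Sf (k : ℤ) (p : ℤ×ℤ) : ℝ≥0∞ :=
  if (p.1+p.2) * (k-p.2) * (k-p.1) ≠ 0 then
    ((((p.1+p.2).natAbs : ℝ≥0∞) * (((k-p.2).natAbs) : ℝ≥0∞) * (((k-p.1).natAbs) : ℝ≥0∞))⁻¹)^2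
  else 0

lemma conv_bound (b1 b2 : ℤ → ℝ≥0∞) (m : ℤ) :
    ∑' u : ℤ, b1 u * b2 (m - u) ≤ N2 b1 * N2 b2 := by
  refine le_trans (cs_tsum b1 (fun u => b2 (m - u))) ?_
  have h : (∑' u : ℤ, b2 (m - u) ^ 2) = ∑' j : ℤ, b2 j ^ 2 :=
    (Equiv.subLeft m).tsum_eq (fun j => b2 j ^ 2)
  rw [h]
  exact le_rfl

lemma lemA (b1 b2 b3 b4 : ℤ → ℝ≥0∞) (k : ℤ) :
    (∑' q : ℤ×ℤ×ℤ×ℤ, Fb b1 b2 b3 b4 k q)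
      ≤ N2 b1 * N2 b2 * ∑' p : ℤ×ℤ, Htf b3 b4 k p := by
  have inner : ∀ p : ℤ×ℤ, (∑' u : ℤ×ℤ, Fb b1 b2 b3 b4 k (e4 (p, u)))
      ≤ N2 b1 * N2 b2 * Htf b3 b4 k p := by
    intro p
    have h2 : ∀ u1 : ℤ, (∑' u2 : ℤ, Fb b1 b2 b3 b4 k (e4 (p, (u1, u2))))
        = (if (p.1+p.2) * (k-p.2) * (k-p.1) ≠ 0 then
            b1 u1 * b2 (k-p.1-p.2-u1) * b3 p.1 * b4 p.2 /
              (((p.1+p.2).natAbs : ℝ≥0∞) * (((k-p.2).natAbs) : ℝ≥0∞) *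
                (((k-p.1).natAbs) : ℝ≥0∞))
          else 0) := by
      intro u1
      rw [tsum_eq_single (k-p.1-p.2-u1) ?_]
      · simp only [e4_apply, Fb]
        have e1 : u1 + (k-p.1-p.2-u1) + p.1 + p.2 = k := by ring
        have e2 : u1 + (k-p.1-p.2-u1) + p.1 = k - p.2 := by ring
        have e3 : u1 + (k-p.1-p.2-u1) + p.2 = k - p.1 := by ring
        simp only [e1, e2, e3]
        simp
      · intro u2 hu2
        simp only [e4_apply, Fb]
        refine if_neg ?_
        rintro ⟨h1, -⟩
        exact hu2 (by omega)
    calc (∑' u : ℤ×ℤ, Fb b1 b2 b3 b4 k (e4 (p, u)))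
        = ∑' u1 : ℤ, ∑' u2 : ℤ, Fb b1 b2 b3 b4 k (e4 (p, (u1, u2))) :=
          ENNReal.tsum_prod (f := fun u1 u2 => Fb b1 b2 b3 b4 k (e4 (p, (u1, u2))))
      _ = ∑' u1 : ℤ, (if (p.1+p.2) * (k-p.2) * (k-p.1) ≠ 0 then
            b1 u1 * b2 (k-p.1-p.2-u1) * b3 p.1 * b4 p.2 /
              (((p.1+p.2).natAbs : ℝ≥0∞) * (((k-p.2).natAbs) : ℝ≥0∞) *
                (((k-p.1).natAbs) : ℝ≥0∞))
          else 0) := tsum_congr h2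
      _ ≤ N2 b1 * N2 b2 * Htf b3 b4 k p := by
          by_cases hc : (p.1+p.2) * (k-p.2) * (k-p.1) ≠ 0
          · have hpos : ∀ u1 : ℤ, (if (p.1+p.2) * (k-p.2) * (k-p.1) ≠ 0 then
                b1 u1 * b2 (k-p.1-p.2-u1) * b3 p.1 * b4 p.2 /
                  (((p.1+p.2).natAbs : ℝ≥0∞) * (((k-p.2).natAbs) : ℝ≥0∞) *
                    (((k-p.1).natAbs) : ℝ≥0∞))
              else 0) = (b1 u1 * b2 (k-p.1-p.2-u1)) * (b3 p.1 * b4 p.2 /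
                  (((p.1+p.2).natAbs : ℝ≥0∞) * (((k-p.2).natAbs) : ℝ≥0∞) *
                    (((k-p.1).natAbs) : ℝ≥0∞))) := by
              intro u1
              rw [if_pos hc, div_eq_mul_inv, div_eq_mul_inv]
              ring
            rw [tsum_congr hpos, ENNReal.tsum_mul_right]
            have hH : Htf b3 b4 k p = b3 p.1 * b4 p.2 /
                (((p.1+p.2).natAbs : ℝ≥0∞) * (((k-p.2).natAbs) : ℝ≥0∞) *
                  (((k-p.1).natAbs) : ℝ≥0∞)) := by
              rw [Htf, if_pos hc]
            rw [hH]
            exact mul_le_mul_left (conv_bound b1 b2 (k-p.1-p.2)) _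
          · have hzero : ∀ u1 : ℤ, (if (p.1+p.2) * (k-p.2) * (k-p.1) ≠ 0 then
                b1 u1 * b2 (k-p.1-p.2-u1) * b3 p.1 * b4 p.2 /
                  (((p.1+p.2).natAbs : ℝ≥0∞) * (((k-p.2).natAbs) : ℝ≥0∞) *
                    (((k-p.1).natAbs) : ℝ≥0∞))
              else 0) = 0 := fun u1 => if_neg hc
            rw [tsum_congr hzero, tsum_zero]
            exact zero_le
  calc (∑' q : ℤ×ℤ×ℤ×ℤ, Fb b1 b2 b3 b4 k q)
      = ∑' r : (ℤ×ℤ)×(ℤ×ℤ), Fb b1 b2 b3 b4 k (e4 r) :=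
        (Equiv.tsum_eq e4 (Fb b1 b2 b3 b4 k)).symm
    _ = ∑' p : ℤ×ℤ, ∑' u : ℤ×ℤ, Fb b1 b2 b3 b4 k (e4 (p, u)) :=
        ENNReal.tsum_prod (f := fun p u => Fb b1 b2 b3 b4 k (e4 (p, u)))
    _ ≤ ∑' p : ℤ×ℤ, N2 b1 * N2 b2 * Htf b3 b4 k p := ENNReal.tsum_le_tsum inner
    _ = N2 b1 * N2 b2 * ∑' p : ℤ×ℤ, Htf b3 b4 k p := ENNReal.tsum_mul_left

lemma lemH (b3 b4 : ℤ → ℝ≥0∞) (k : ℤ) :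
    (∑' p : ℤ×ℤ, Htf b3 b4 k p)^2 ≤ (N2 b3)^2 * (N2 b4)^2 * ∑' p : ℤ×ℤ, Sf k p := by
  have hsplit : ∀ p : ℤ×ℤ, Htf b3 b4 k p = (b3 p.1 * b4 p.2) *
      (if (p.1+p.2) * (k-p.2) * (k-p.1) ≠ 0 then
        (((p.1+p.2).natAbs : ℝ≥0∞) * (((k-p.2).natAbs) : ℝ≥0∞) *
          (((k-p.1).natAbs) : ℝ≥0∞))⁻¹ else 0) := by
    intro p
    by_cases hc : (p.1+p.2) * (k-p.2) * (k-p.1) ≠ 0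
    · rw [Htf, if_pos hc, if_pos hc, div_eq_mul_inv]
    · rw [Htf, if_neg hc, if_neg hc, mul_zero]
  have hg2 : ∀ p : ℤ×ℤ, ((if (p.1+p.2) * (k-p.2) * (k-p.1) ≠ 0 then
        (((p.1+p.2).natAbs : ℝ≥0∞) * (((k-p.2).natAbs) : ℝ≥0∞) *
          (((k-p.1).natAbs) : ℝ≥0∞))⁻¹ else 0))^2 = Sf k p := by
    intro p
    by_cases hc : (p.1+p.2) * (k-p.2) * (k-p.1) ≠ 0
    · rw [if_pos hc, Sf, if_pos hc]
    · rw [if_neg hc, Sf, if_neg hc]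
      norm_num
  have hf2 : (∑' p : ℤ×ℤ, (b3 p.1 * b4 p.2)^2)
      = (∑' i : ℤ, b3 i ^2) * (∑' j : ℤ, b4 j ^2) := by
    calc (∑' p : ℤ×ℤ, (b3 p.1 * b4 p.2)^2)
        = ∑' i : ℤ, ∑' j : ℤ, (b3 i * b4 j)^2 :=
          ENNReal.tsum_prod (f := fun i j => (b3 i * b4 j)^2)
      _ = ∑' i : ℤ, ∑' j : ℤ, b3 i ^2 * b4 j ^2 :=
          tsum_congr fun i => tsum_congr fun j => mul_pow _ _ _
      _ = ∑' i : ℤ, b3 i ^2 * ∑' j : ℤ, b4 j ^2 :=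
          tsum_congr fun i => ENNReal.tsum_mul_left
      _ = _ := ENNReal.tsum_mul_right
  have hb : (∑' p : ℤ×ℤ, Htf b3 b4 k p)
      ≤ N2 b3 * N2 b4 * (∑' p : ℤ×ℤ, Sf k p)^(1/2:ℝ) := by
    calc (∑' p : ℤ×ℤ, Htf b3 b4 k p)
        ≤ (∑' p : ℤ×ℤ, (b3 p.1 * b4 p.2)^2)^(1/2:ℝ) *
          (∑' p : ℤ×ℤ, ((if (p.1+p.2) * (k-p.2) * (k-p.1) ≠ 0 then
            (((p.1+p.2).natAbs : ℝ≥0∞) * (((k-p.2).natAbs) : ℝ≥0∞) *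
              (((k-p.1).natAbs) : ℝ≥0∞))⁻¹ else 0))^2)^(1/2:ℝ) := by
          rw [tsum_congr hsplit]
          exact cs_tsum _ _
      _ = N2 b3 * N2 b4 * (∑' p : ℤ×ℤ, Sf k p)^(1/2:ℝ) := by
          rw [tsum_congr hg2, hf2,
            ENNReal.mul_rpow_of_nonneg _ _ (by norm_num : (0:ℝ) ≤ 1/2)]
          rfl
  calc (∑' p : ℤ×ℤ, Htf b3 b4 k p)^2
      ≤ (N2 b3 * N2 b4 * (∑' p : ℤ×ℤ, Sf k p)^(1/2:ℝ))^2 :=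
        pow_le_pow_left₀ zero_le hb 2
    _ = (N2 b3)^2 * (N2 b4)^2 * ∑' p : ℤ×ℤ, Sf k p := by
        rw [mul_pow, mul_pow, ← ENNReal.rpow_natCast ((∑' p : ℤ×ℤ, Sf k p)^(1/2:ℝ)) 2,
          ← ENNReal.rpow_mul]
        norm_num

lemma lemS : (∑' k : ℤ, ∑' p : ℤ×ℤ, Sf k p) ≤ KK^3 := by
  have hinner : ∀ u v : ℤ, (∑' kk : ℤ, (Af u * Af v) * Af (2*kk - u - v))
      ≤ (Af u * Af v) * KK := by
    intro u v
    rw [ENNReal.tsum_mul_left]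
    refine mul_le_mul_right ?_ _
    have hinj : Function.Injective (fun kk : ℤ => 2*kk - u - v) := by
      intro a b h
      simp only at h
      omega
    calc (∑' kk : ℤ, Af (2*kk - u - v)) ≤ ∑' n : ℤ, Af n :=
          ENNReal.tsum_comp_le_tsum_of_injective hinj Af
      _ = KK := KK_eq.symm
  calc (∑' k : ℤ, ∑' p : ℤ×ℤ, Sf k p)
      = ∑' q : ℤ×(ℤ×ℤ), Sf q.1 q.2 := (ENNReal.tsum_prod (f := fun k p => Sf k p)).symm
    _ = ∑' r : ℤ×ℤ×ℤ, Sf (psiE r).1 (psiE r).2 :=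
        (Equiv.tsum_eq psiE (fun q => Sf q.1 q.2)).symm
    _ = ∑' u : ℤ, ∑' w : ℤ×ℤ, Sf (psiE (u, w)).1 (psiE (u, w)).2 :=
        ENNReal.tsum_prod (f := fun u w => Sf (psiE (u, w)).1 (psiE (u, w)).2)
    _ = ∑' u : ℤ, ∑' v : ℤ, ∑' kk : ℤ, Sf (psiE (u, (v, kk))).1 (psiE (u, (v, kk))).2 :=
        tsum_congr fun u => ENNReal.tsum_prod (f := fun v kk => Sf (psiE (u, (v, kk))).1 (psiE (u, (v, kk))).2)
    _ = ∑' u : ℤ, ∑' v : ℤ, ∑' kk : ℤ, (Af u * Af v) * Af (2*kk - u - v) := by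
        refine tsum_congr fun u => tsum_congr fun v => tsum_congr fun kk => ?_
        show Sf kk (kk - u, kk - v) = _
        simp only [Sf]
        have e1 : (kk-u) + (kk-v) = 2*kk - u - v := by ring
        have e2 : kk - (kk-v) = v := by ring
        have e3 : kk - (kk-u) = u := by ring
        rw [e1, e2, e3, ite_split]
        rfl
    _ ≤ ∑' u : ℤ, ∑' v : ℤ, (Af u * Af v) * KK :=
        ENNReal.tsum_le_tsum fun u => ENNReal.tsum_le_tsum fun v => hinner u v
    _ = ∑' u : ℤ, ∑' v : ℤ, (Af u * KK) * Af v :=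
        tsum_congr fun u => tsum_congr fun v => by ring
    _ = ∑' u : ℤ, (Af u * KK) * KK := tsum_congr fun u => by
        rw [ENNReal.tsum_mul_left, ← KK_eq]
    _ = ∑' u : ℤ, (KK * KK) * Af u := tsum_congr fun u => by ring
    _ = (KK * KK) * KK := by rw [ENNReal.tsum_mul_left, ← KK_eq]
    _ = KK^3 := by ring

lemma core (b1 b2 b3 b4 : ℤ → ℝ≥0∞) :
    (∑' k : ℤ, (∑' q : ℤ×ℤ×ℤ×ℤ, Fb b1 b2 b3 b4 k q)^2)^(1/2:ℝ)
      ≤ KK^(3/2:ℝ) * (N2 b1 * N2 b2 * N2 b3 * N2 b4) := by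
  calc (∑' k : ℤ, (∑' q : ℤ×ℤ×ℤ×ℤ, Fb b1 b2 b3 b4 k q)^2)^(1/2:ℝ)
      ≤ (∑' k : ℤ, (N2 b1 * N2 b2 * (∑' p : ℤ×ℤ, Htf b3 b4 k p))^2)^(1/2:ℝ) :=
        ENNReal.rpow_le_rpow (ENNReal.tsum_le_tsum fun k =>
          pow_le_pow_left₀ zero_le (lemA b1 b2 b3 b4 k) 2) (by norm_num)
    _ = (N2 b1 * N2 b2) * (∑' k : ℤ, (∑' p : ℤ×ℤ, Htf b3 b4 k p)^2)^(1/2:ℝ) := by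
        rw [tsum_congr (fun k => mul_pow (N2 b1 * N2 b2) (∑' p : ℤ×ℤ, Htf b3 b4 k p) 2),
          ENNReal.tsum_mul_left,
          ENNReal.mul_rpow_of_nonneg _ _ (by norm_num : (0:ℝ) ≤ 1/2), sq_rt]
    _ ≤ (N2 b1 * N2 b2) * (((N2 b3)^2 * (N2 b4)^2) * KK^3)^(1/2:ℝ) := by
        refine mul_le_mul_right (ENNReal.rpow_le_rpow ?_ (by norm_num)) _
        calc (∑' k : ℤ, (∑' p : ℤ×ℤ, Htf b3 b4 k p)^2)
            ≤ ∑' k : ℤ, ((N2 b3)^2 * (N2 b4)^2) * (∑' p : ℤ×ℤ, Sf k p) :=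
              ENNReal.tsum_le_tsum fun k => lemH b3 b4 k
          _ = ((N2 b3)^2 * (N2 b4)^2) * ∑' k : ℤ, ∑' p : ℤ×ℤ, Sf k p :=
              ENNReal.tsum_mul_left
          _ ≤ ((N2 b3)^2 * (N2 b4)^2) * KK^3 := mul_le_mul_right lemS _
    _ = (N2 b1 * N2 b2) * ((N2 b3 * N2 b4) * KK^(3/2:ℝ)) := by
        rw [ENNReal.mul_rpow_of_nonneg _ _ (by norm_num : (0:ℝ) ≤ 1/2),
          ENNReal.mul_rpow_of_nonneg _ _ (by norm_num : (0:ℝ) ≤ 1/2), sq_rt, sq_rt,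
          ← ENNReal.rpow_natCast KK 3, ← ENNReal.rpow_mul]
        norm_num
    _ = KK^(3/2:ℝ) * (N2 b1 * N2 b2 * N2 b3 * N2 b4) := by ring



noncomputable def Fa (a1 a2 a3 a4 : ℤ → NNReal) (k : ℤ) (q : ℤ×ℤ×ℤ×ℤ) : ℝ≥0∞ :=
  if q.1 + q.2.1 + q.2.2.1 + q.2.2.2 = k ∧
      (q.2.2.1 + q.2.2.2) * (q.1 + q.2.1 + q.2.2.1) * (q.1 + q.2.1 + q.2.2.2) ≠ 0
  then (a1 q.1 : ℝ≥0∞) * (a2 q.2.1 : ℝ≥0∞) * (a3 q.2.2.1 : ℝ≥0∞) * (a4 q.2.2.2 : ℝ≥0∞) /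
      (((q.2.2.1 + q.2.2.2).natAbs : ℝ≥0∞) *
        ((q.1 + q.2.1 + q.2.2.1).natAbs : ℝ≥0∞) *
        ((q.1 + q.2.1 + q.2.2.2).natAbs : ℝ≥0∞))
  else 0

lemma term_bound {s : ℝ} (hs : 0 ≤ s) (a1 a2 a3 a4 : ℤ → NNReal) (k : ℤ) (q : ℤ×ℤ×ℤ×ℤ) :
    wgt s k * Fa a1 a2 a3 a4 k q ≤ ENNReal.ofReal ((8:ℝ)^(s/2)) *
      Fb (fun k => wgt s k * (a1 k : ℝ≥0∞)) (fun k => wgt s k * (a2 k : ℝ≥0∞))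
        (fun k => wgt s k * (a3 k : ℝ≥0∞)) (fun k => wgt s k * (a4 k : ℝ≥0∞)) k q := by
  simp only [Fa, Fb]
  by_cases hq : q.1 + q.2.1 + q.2.2.1 + q.2.2.2 = k ∧
      (q.2.2.1 + q.2.2.2) * (q.1 + q.2.1 + q.2.2.1) * (q.1 + q.2.1 + q.2.2.2) ≠ 0
  · rw [if_pos hq, if_pos hq, ← mul_div_assoc, ← mul_div_assoc]
    refine ENNReal.div_le_div_right ?_ _
    calc wgt s k * ((a1 q.1 : ℝ≥0∞) * (a2 q.2.1 : ℝ≥0∞) * (a3 q.2.2.1 : ℝ≥0∞) * (a4 q.2.2.2 : ℝ≥0∞))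
        ≤ (ENNReal.ofReal ((8:ℝ)^(s/2)) *
            (wgt s q.1 * (wgt s q.2.1 * (wgt s q.2.2.1 * wgt s q.2.2.2)))) *
          ((a1 q.1 : ℝ≥0∞) * (a2 q.2.1 : ℝ≥0∞) * (a3 q.2.2.1 : ℝ≥0∞) * (a4 q.2.2.2 : ℝ≥0∞)) :=
          mul_le_mul_left (wgt_split hs hq.1) _
      _ = ENNReal.ofReal ((8:ℝ)^(s/2)) *
          (wgt s q.1 * (a1 q.1 : ℝ≥0∞) * (wgt s q.2.1 * (a2 q.2.1 : ℝ≥0∞)) *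
            (wgt s q.2.2.1 * (a3 q.2.2.1 : ℝ≥0∞)) * (wgt s q.2.2.2 * (a4 q.2.2.2 : ℝ≥0∞))) := by
          ring
  · rw [if_neg hq, if_neg hq, mul_zero, mul_zero]

end Stmt13Aux



open Stmt13Aux

theorem stmt13 (s : ℝ) (hs : 0 ≤ s) :
    ∃ C : ℝ, 0 < C ∧ ∀ a1 a2 a3 a4 : ℤ → NNReal,
      HsE s (fun k =>
        ∑' q : ℤ × ℤ × ℤ × ℤ,
          if q.1 + q.2.1 + q.2.2.1 + q.2.2.2 = k ∧
             (q.2.2.1 + q.2.2.2) * (q.1 + q.2.1 + q.2.2.1) * (q.1 + q.2.1 + q.2.2.2) ≠ 0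
          then (a1 q.1 : ℝ≥0∞) * (a2 q.2.1 : ℝ≥0∞) * (a3 q.2.2.1 : ℝ≥0∞) *
                (a4 q.2.2.2 : ℝ≥0∞) /
              (((q.2.2.1 + q.2.2.2).natAbs : ℝ≥0∞) *
                ((q.1 + q.2.1 + q.2.2.1).natAbs : ℝ≥0∞) *
                ((q.1 + q.2.1 + q.2.2.2).natAbs : ℝ≥0∞))
          else 0)
      ≤ ENNReal.ofReal C * HsE s (fun k => (a1 k : ℝ≥0∞)) * HsE s (fun k => (a2 k : ℝ≥0∞)) *
          HsE s (fun k => (a3 k : ℝ≥0∞)) * HsE s (fun k => (a4 k : ℝ≥0∞)) := by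
  have hfin : ENNReal.ofReal ((8:ℝ)^(s/2)) * KK^(3/2:ℝ) ≠ ⊤ :=
    ENNReal.mul_ne_top ENNReal.ofReal_ne_top
      (ENNReal.rpow_ne_top_of_nonneg (by norm_num) KK_ne_top)
  refine ⟨(ENNReal.ofReal ((8:ℝ)^(s/2)) * KK^(3/2:ℝ)).toReal + 1, by positivity, ?_⟩
  intro a1 a2 a3 a4
  have hC : ENNReal.ofReal ((8:ℝ)^(s/2)) * KK^(3/2:ℝ) ≤
      ENNReal.ofReal ((ENNReal.ofReal ((8:ℝ)^(s/2)) * KK^(3/2:ℝ)).toReal + 1) :=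
    calc ENNReal.ofReal ((8:ℝ)^(s/2)) * KK^(3/2:ℝ)
        = ENNReal.ofReal ((ENNReal.ofReal ((8:ℝ)^(s/2)) * KK^(3/2:ℝ)).toReal) :=
          (ENNReal.ofReal_toReal hfin).symm
      _ ≤ _ := ENNReal.ofReal_le_ofReal (by linarith)
  have h1 : HsE s (fun k => (a1 k : ℝ≥0∞)) = N2 (fun k => wgt s k * (a1 k : ℝ≥0∞)) := HsE_eq s _
  have h2 : HsE s (fun k => (a2 k : ℝ≥0∞)) = N2 (fun k => wgt s k * (a2 k : ℝ≥0∞)) := HsE_eq s _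
  have h3 : HsE s (fun k => (a3 k : ℝ≥0∞)) = N2 (fun k => wgt s k * (a3 k : ℝ≥0∞)) := HsE_eq s _
  have h4 : HsE s (fun k => (a4 k : ℝ≥0∞)) = N2 (fun k => wgt s k * (a4 k : ℝ≥0∞)) := HsE_eq s _
  have hkey : ∀ k : ℤ, wgt s k * (∑' q : ℤ×ℤ×ℤ×ℤ, Fa a1 a2 a3 a4 k q) ≤
      ENNReal.ofReal ((8:ℝ)^(s/2)) * ∑' q : ℤ×ℤ×ℤ×ℤ,
        Fb (fun k => wgt s k * (a1 k : ℝ≥0∞)) (fun k => wgt s k * (a2 k : ℝ≥0∞))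
          (fun k => wgt s k * (a3 k : ℝ≥0∞)) (fun k => wgt s k * (a4 k : ℝ≥0∞)) k q := by
    intro k
    calc wgt s k * (∑' q : ℤ×ℤ×ℤ×ℤ, Fa a1 a2 a3 a4 k q)
        = ∑' q : ℤ×ℤ×ℤ×ℤ, wgt s k * Fa a1 a2 a3 a4 k q := ENNReal.tsum_mul_left.symm
      _ ≤ ∑' q : ℤ×ℤ×ℤ×ℤ, ENNReal.ofReal ((8:ℝ)^(s/2)) *
            Fb (fun k => wgt s k * (a1 k : ℝ≥0∞)) (fun k => wgt s k * (a2 k : ℝ≥0∞))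
              (fun k => wgt s k * (a3 k : ℝ≥0∞)) (fun k => wgt s k * (a4 k : ℝ≥0∞)) k q :=
          ENNReal.tsum_le_tsum (term_bound hs a1 a2 a3 a4 k)
      _ = _ := ENNReal.tsum_mul_left
  calc HsE s (fun k => ∑' q : ℤ×ℤ×ℤ×ℤ, Fa a1 a2 a3 a4 k q)
      = (∑' k : ℤ, (wgt s k * ∑' q : ℤ×ℤ×ℤ×ℤ, Fa a1 a2 a3 a4 k q)^2)^(1/2:ℝ) := HsE_eq s _
    _ ≤ (∑' k : ℤ, (ENNReal.ofReal ((8:ℝ)^(s/2)) * ∑' q : ℤ×ℤ×ℤ×ℤ,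
          Fb (fun k => wgt s k * (a1 k : ℝ≥0∞)) (fun k => wgt s k * (a2 k : ℝ≥0∞))
            (fun k => wgt s k * (a3 k : ℝ≥0∞)) (fun k => wgt s k * (a4 k : ℝ≥0∞)) k q)^2)^(1/2:ℝ) :=
        ENNReal.rpow_le_rpow (ENNReal.tsum_le_tsum fun k =>
          pow_le_pow_left₀ zero_le (hkey k) 2) (by norm_num)
    _ = ENNReal.ofReal ((8:ℝ)^(s/2)) * (∑' k : ℤ, (∑' q : ℤ×ℤ×ℤ×ℤ,
          Fb (fun k => wgt s k * (a1 k : ℝ≥0∞)) (fun k => wgt s k * (a2 k : ℝ≥0∞))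
            (fun k => wgt s k * (a3 k : ℝ≥0∞)) (fun k => wgt s k * (a4 k : ℝ≥0∞)) k q)^2)^(1/2:ℝ) := by
        rw [tsum_congr (fun k => mul_pow (ENNReal.ofReal ((8:ℝ)^(s/2))) (∑' q : ℤ×ℤ×ℤ×ℤ,
            Fb (fun k => wgt s k * (a1 k : ℝ≥0∞)) (fun k => wgt s k * (a2 k : ℝ≥0∞))
              (fun k => wgt s k * (a3 k : ℝ≥0∞)) (fun k => wgt s k * (a4 k : ℝ≥0∞)) k q) 2),
          ENNReal.tsum_mul_left,
          ENNReal.mul_rpow_of_nonneg _ _ (by norm_num : (0:ℝ) ≤ 1/2), sq_rt]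
    _ ≤ ENNReal.ofReal ((8:ℝ)^(s/2)) * (KK^(3/2:ℝ) *
          (N2 (fun k => wgt s k * (a1 k : ℝ≥0∞)) * N2 (fun k => wgt s k * (a2 k : ℝ≥0∞)) *
            N2 (fun k => wgt s k * (a3 k : ℝ≥0∞)) * N2 (fun k => wgt s k * (a4 k : ℝ≥0∞)))) :=
        mul_le_mul_right (core _ _ _ _) _
    _ = (ENNReal.ofReal ((8:ℝ)^(s/2)) * KK^(3/2:ℝ)) * N2 (fun k => wgt s k * (a1 k : ℝ≥0∞)) *
          N2 (fun k => wgt s k * (a2 k : ℝ≥0∞)) * N2 (fun k => wgt s k * (a3 k : ℝ≥0∞)) *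
          N2 (fun k => wgt s k * (a4 k : ℝ≥0∞)) := by ring
    _ ≤ ENNReal.ofReal ((ENNReal.ofReal ((8:ℝ)^(s/2)) * KK^(3/2:ℝ)).toReal + 1) *
          N2 (fun k => wgt s k * (a1 k : ℝ≥0∞)) * N2 (fun k => wgt s k * (a2 k : ℝ≥0∞)) *
          N2 (fun k => wgt s k * (a3 k : ℝ≥0∞)) * N2 (fun k => wgt s k * (a4 k : ℝ≥0∞)) :=
        mul_le_mul_left (mul_le_mul_left (mul_le_mul_left (mul_le_mul_left hC _) _) _) _
    _ = ENNReal.ofReal ((ENNReal.ofReal ((8:ℝ)^(s/2)) * KK^(3/2:ℝ)).toReal + 1) *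
          HsE s (fun k => (a1 k : ℝ≥0∞)) * HsE s (fun k => (a2 k : ℝ≥0∞)) *
          HsE s (fun k => (a3 k : ℝ≥0∞)) * HsE s (fun k => (a4 k : ℝ≥0∞)) := by
        rw [h1, h2, h3, h4]
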